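/- Under the continuous-time maximum-consensus dynamics ẋ_i(t) = max_{j ∈ N_i ∪ {i}} a_j(t)·(x_j(t) − x_i(t)), with each weight function a_j continuous and uniformly bounded above and below by positive constants, every node's state converges as t → ∞ to the maximum of the initial states: lim_{t→∞} x_i(t) = max_{1 ≤ j ≤ n} x_j(0) for every node i. -/

import Mathlib

open Filter Topology

lemma hasDerivAt_posSq (y : ℝ) :
    HasDerivAt (fun z : ℝ => (max z 0)^2) (2 * max y 0) y := by
  rcases lt_trichotomy y 0 with h | h | h
  · have hev : (fun _ : ℝ => (0:ℝ)) =ᶠ[𝓝 y] (fun z : ℝ => (max z 0)^2) := by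
      filter_upwards [Iio_mem_nhds h] with z hz
      simp [max_eq_right (le_of_lt (Set.mem_Iio.mp hz))]
    have h0 : HasDerivAt (fun _ : ℝ => (0:ℝ)) 0 y := hasDerivAt_const y 0
    have := h0.congr_of_eventuallyEq hev.symm
    simpa [max_eq_right h.le] using this
  · subst h
    rw [hasDerivAt_iff_tendsto]
    have hb : ∀ z : ℝ, ‖z - 0‖⁻¹ * ‖(max z 0)^2 - (max (0:ℝ) 0)^2 - (z - 0) • (2 * max (0:ℝ) 0)‖ ≤ |z| := by
      intro z
      rcases eq_or_ne z 0 with rfl | hz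
      · simp
      · have h1 : max z 0 ≤ |z| := max_le (le_abs_self z) (abs_nonneg z)
        have h2 : (max z 0)^2 ≤ |z|^2 := pow_le_pow_left₀ (le_max_right z 0) h1 2
        have h3 : ‖(max z 0)^2 - (max (0:ℝ) 0)^2 - (z - 0) • (2 * max (0:ℝ) 0)‖ = (max z 0)^2 := by
          simp [Real.norm_eq_abs, abs_of_nonneg (sq_nonneg (max z 0))]
        rw [h3]
        have h4 : ‖z - 0‖⁻¹ = |z|⁻¹ := by simp [Real.norm_eq_abs]
        rw [h4]
        calc |z|⁻¹ * (max z 0)^2 ≤ |z|⁻¹ * |z|^2 :=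
              mul_le_mul_of_nonneg_left h2 (inv_nonneg.mpr (abs_nonneg z))
          _ = |z| := by
              rw [sq, ← mul_assoc, inv_mul_cancel₀ (abs_ne_zero.mpr hz), one_mul]
    have habs : Tendsto (fun z : ℝ => |z|) (𝓝 0) (𝓝 0) := by
      simpa using continuous_abs.tendsto (0:ℝ)
    have := squeeze_zero (fun z => by positivity) hb habs
    simpa using this
  · have hev : (fun z : ℝ => z^2) =ᶠ[𝓝 y] (fun z : ℝ => (max z 0)^2) := by
      filter_upwards [Ioi_mem_nhds h] with z hz
      simp [max_eq_left (le_of_lt (Set.mem_Ioi.mp hz))]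
    have h0 : HasDerivAt (fun z : ℝ => z^2) (2 * y) y := by
      simpa using hasDerivAt_pow 2 y
    have := h0.congr_of_eventuallyEq hev.symm
    simpa [max_eq_left h.le] using this

set_option maxHeartbeats 1000000 in
/-- Continuous-time maximum consensus: under the dynamics
ẋ_i(t) = max_{j ∈ N_i ∪ {i}} a_j(t)·(x_j(t) − x_i(t)) with continuous weight
functions uniformly bounded in [δ, ā] with 0 < δ ≤ ā, every node's state
converges to the maximum of the initial states. -/
theorem ct_maximum_consensus
    (n : ℕ) (hn : 2 ≤ n)
    (G : SimpleGraph (Fin n)) [DecidableRel G.Adj]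
    (hconn : G.Connected)
    (x : ℝ → Fin n → ℝ)
    (a : Fin n → ℝ → ℝ)
    (ha_cont : ∀ j, Continuous (a j))
    (δ abar : ℝ) (hδ : 0 < δ) (hδa : δ ≤ abar)
    (hbound : ∀ j, ∀ t : ℝ, 0 ≤ t → δ ≤ a j t ∧ a j t ≤ abar)
    (hdyn : ∀ i, ∀ t : ℝ, 0 ≤ t →
      HasDerivAt (fun s => x s i)
        ((insert i (G.neighborFinset i)).sup'
          (Finset.insert_nonempty i _) (fun j => a j t * (x t j - x t i))) t) :
    ∀ i, Tendsto (fun t => x t i) atTop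
      (𝓝 (Finset.univ.sup' (Finset.univ_nonempty_iff.mpr ⟨⟨0, by omega⟩⟩)
            (fun j => x 0 j))) := by
  have habar : 0 < abar := lt_of_lt_of_le hδ hδa
  set M : ℝ := Finset.univ.sup' (Finset.univ_nonempty_iff.mpr ⟨⟨0, by omega⟩⟩)
      (fun j => x 0 j) with hMdef
  set D : Fin n → ℝ → ℝ := fun i t => (insert i (G.neighborFinset i)).sup'
      (Finset.insert_nonempty i _) (fun j => a j t * (x t j - x t i)) with hDdef
  -- basic facts
  have hD0 : ∀ i t, 0 ≤ D i t := by
    intro i t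
    have : a i t * (x t i - x t i) ≤ D i t :=
      Finset.le_sup' (fun j => a j t * (x t j - x t i)) (Finset.mem_insert_self i _)
    simpa using this
  have hcont : ∀ i, ContinuousOn (fun t => x t i) (Set.Ici (0:ℝ)) := by
    intro i t ht
    exact (hdyn i t ht).continuousAt.continuousWithinAt
  have hdiff : ∀ i, DifferentiableOn ℝ (fun t => x t i) (interior (Set.Ici (0:ℝ))) := by
    intro i t ht
    rw [interior_Ici] at ht
    exact (hdyn i t (le_of_lt ht)).differentiableAt.differentiableWithinAt
  have hmono : ∀ i, MonotoneOn (fun t => x t i) (Set.Ici (0:ℝ)) := by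
    intro i
    refine monotoneOn_of_deriv_nonneg (convex_Ici 0) (hcont i) (hdiff i) ?_
    intro t ht
    rw [interior_Ici] at ht
    rw [(hdyn i t (le_of_lt ht)).deriv]
    exact hD0 i t
  -- upper bound via Lyapunov function
  set p : Fin n → ℝ → ℝ := fun i t => max (x t i - M) 0 with hpdef
  have hp0 : ∀ i t, 0 ≤ p i t := fun i t => le_max_right _ _
  set V : ℝ → ℝ := fun t => ∑ i, (p i t)^2 with hVdef
  have hV0 : ∀ t, 0 ≤ V t := fun t => Finset.sum_nonneg fun i _ => sq_nonneg _
  set K : ℝ := 2 * n * abar with hKdef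
  have hVderiv : ∀ t : ℝ, 0 ≤ t →
      HasDerivAt V (∑ i, (2 * p i t) * D i t) t := by
    intro t ht
    refine HasDerivAt.fun_sum fun i _ => ?_
    have hcomp := (hasDerivAt_posSq (x t i - M)).comp t ((hdyn i t ht).sub_const M)
    exact hcomp
  have hterm : ∀ t : ℝ, 0 ≤ t → ∀ i : Fin n, p i t * D i t ≤ abar * V t := by
    intro t ht i
    have hVt := hV0 t
    obtain ⟨j, hj, hjeq⟩ := Finset.exists_mem_eq_sup' (Finset.insert_nonempty i (G.neighborFinset i))
      (fun j => a j t * (x t j - x t i))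
    have hDi : D i t = a j t * (x t j - x t i) := hjeq
    rcases eq_or_lt_of_le (hp0 i t) with hpi | hpi
    · rw [← hpi]
      simp
      positivity
    · have hxi : M < x t i := by
        by_contra hle
        push_neg at hle
        have : p i t = 0 := max_eq_right (by linarith)
        rw [this] at hpi; exact lt_irrefl 0 hpi
      rcases le_or_gt (x t j) (x t i) with hji | hji
      · have hDneg : D i t ≤ 0 := by
          rw [hDi]
          have := (hbound j t ht).1
          nlinarith
        nlinarith [hp0 i t]
      · have haj := hbound j t ht
        have hpj : x t j - M ≤ p j t := le_max_left _ _
        have hpiv : x t i - M ≤ p i t := le_max_left _ _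
        have hDle : D i t ≤ abar * p j t := by
          rw [hDi]
          nlinarith [haj.1, haj.2]
        have hi2 : (p i t)^2 ≤ V t :=
          Finset.single_le_sum (fun k _ => sq_nonneg (p k t)) (Finset.mem_univ i)
        have hj2 : (p j t)^2 ≤ V t :=
          Finset.single_le_sum (fun k _ => sq_nonneg (p k t)) (Finset.mem_univ j)
        nlinarith [hp0 i t, hp0 j t, sq_nonneg (p i t - p j t)]
  have hVbound : ∀ t : ℝ, 0 ≤ t → (∑ i, (2 * p i t) * D i t) ≤ K * V t := by
    intro t ht
    have h1 : ∀ i : Fin n, (2 * p i t) * D i t ≤ 2 * (abar * V t) := by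
      intro i
      have := hterm t ht i
      nlinarith [hp0 i t, hD0 i t]
    calc (∑ i, (2 * p i t) * D i t) ≤ ∑ _i : Fin n, 2 * (abar * V t) :=
          Finset.sum_le_sum fun i _ => h1 i
      _ = n * (2 * (abar * V t)) := by
          rw [Finset.sum_const, Finset.card_univ, Fintype.card_fin, nsmul_eq_mul]
      _ = K * V t := by rw [hKdef]; ring
  -- W = V * exp(-K t) is antitone on [0, ∞)
  set W : ℝ → ℝ := fun t => V t * Real.exp (-K * t) with hWdef
  have hWderiv : ∀ t : ℝ, 0 ≤ t →
      HasDerivAt W ((∑ i, (2 * p i t) * D i t) * Real.exp (-K * t)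
        + V t * (Real.exp (-K * t) * (-K * 1))) t := by
    intro t ht
    have hE : HasDerivAt (fun s : ℝ => Real.exp (-K * s)) (Real.exp (-K * t) * (-K * 1)) t :=
      ((hasDerivAt_id t).const_mul (-K)).exp
    exact (hVderiv t ht).mul hE
  have hWanti : AntitoneOn W (Set.Ici (0:ℝ)) := by
    refine antitoneOn_of_deriv_nonpos (convex_Ici 0) ?_ ?_ ?_
    · intro t ht
      exact (hWderiv t ht).continuousAt.continuousWithinAt
    · intro t ht
      rw [interior_Ici] at ht
      exact (hWderiv t (le_of_lt ht)).differentiableAt.differentiableWithinAt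
    · intro t ht
      rw [interior_Ici] at ht
      have ht0 : (0:ℝ) ≤ t := le_of_lt ht
      rw [(hWderiv t ht0).deriv]
      have hb := hVbound t ht0
      have hexp : 0 < Real.exp (-K * t) := Real.exp_pos _
      have hKpos : 0 < K := by rw [hKdef]; positivity
      nlinarith [hV0 t]
  have hinit : ∀ i : Fin n, x 0 i ≤ M :=
    fun i => Finset.le_sup' (fun j => x 0 j) (Finset.mem_univ i)
  have hW0 : W 0 = 0 := by
    have : ∀ i : Fin n, p i 0 = 0 := by
      intro i
      exact max_eq_right (by linarith [hinit i])
    simp [hWdef, hVdef, this]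
  have hub : ∀ i t, (0:ℝ) ≤ t → x t i ≤ M := by
    intro i t ht
    have hWt : W t ≤ 0 := by
      have := hWanti (Set.self_mem_Ici) (Set.mem_Ici.mpr ht) ht
      rwa [hW0] at this
    have hVt : V t = 0 := by
      have hexp : 0 < Real.exp (-K * t) := Real.exp_pos _
      have : V t * Real.exp (-K * t) ≤ 0 := hWt
      nlinarith [hV0 t]
    have hpi : (p i t)^2 = 0 := by
      have hle : (p i t)^2 ≤ V t :=
        Finset.single_le_sum (fun k _ => sq_nonneg (p k t)) (Finset.mem_univ i)
      nlinarith [sq_nonneg (p i t)]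
    have : p i t = 0 := by
      have := pow_eq_zero_iff (n := 2) (by norm_num) |>.mp hpi
      exact this
    have hle : x t i - M ≤ p i t := le_max_left _ _
    linarith [hle.trans_eq this]
  -- the initial argmax node stays at M
  obtain ⟨P, _, hP⟩ := Finset.exists_mem_eq_sup'
    (Finset.univ_nonempty_iff.mpr ⟨(⟨0, by omega⟩ : Fin n)⟩) (fun j => x 0 j)
  have hPM : ∀ t : ℝ, 0 ≤ t → x t P = M := by
    intro t ht
    refine le_antisymm (hub P t ht) ?_
    have := hmono P Set.self_mem_Ici (Set.mem_Ici.mpr ht) ht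
    calc M = x 0 P := hP
      _ ≤ x t P := this
  -- propagation property
  set Q : Fin n → Prop := fun i => ∀ ε : ℝ, 0 < ε → ∃ T : ℝ, 0 ≤ T ∧ ∀ t, T ≤ t → M - ε ≤ x t i
    with hQdef
  have hQP : Q P := by
    intro ε hε
    exact ⟨0, le_refl 0, fun t ht => by rw [hPM t ht]; linarith⟩
  have hstep : ∀ u v : Fin n, G.Adj u v → Q u → Q v := by
    intro u v huv hu ε hε
    obtain ⟨T, hT0, hT⟩ := hu (ε/2) (by positivity)
    suffices h : ∃ s, T ≤ s ∧ M - ε ≤ x s v by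
      obtain ⟨s, hs, hxs⟩ := h
      refine ⟨s, hT0.trans hs, fun t hts => ?_⟩
      have hs0 : (0:ℝ) ≤ s := hT0.trans hs
      exact hxs.trans (hmono v (Set.mem_Ici.mpr hs0) (Set.mem_Ici.mpr (hs0.trans hts)) hts)
    by_contra hcon
    push_neg at hcon
    have key : ∀ t ∈ interior (Set.Ici T), δ * (ε/2) ≤ deriv (fun s => x s v) t := by
      intro t ht
      rw [interior_Ici] at ht
      have htT : T < t := ht
      have ht0 : (0:ℝ) ≤ t := hT0.trans htT.le
      rw [(hdyn v t ht0).deriv]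
      have hmem : u ∈ insert v (G.neighborFinset v) :=
        Finset.mem_insert_of_mem ((SimpleGraph.mem_neighborFinset G v u).mpr huv.symm)
      have h1 : a u t * (x t u - x t v) ≤ D v t :=
        Finset.le_sup' (fun j => a j t * (x t j - x t v)) hmem
      have h2 : M - ε/2 ≤ x t u := hT t htT.le
      have h3 : x t v < M - ε := hcon t htT.le
      have h4 := (hbound u t ht0).1
      have h5 : ε/2 ≤ x t u - x t v := by linarith
      have h6 : δ * (ε/2) ≤ a u t * (x t u - x t v) := by nlinarith
      exact h6.trans h1
    have hgrow := (convex_Ici T).mul_sub_le_image_sub_of_le_deriv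
      ((hcont v).mono (Set.Ici_subset_Ici.mpr hT0))
      (fun t ht => by
        rw [interior_Ici] at ht
        exact (hdyn v t (hT0.trans (le_of_lt ht))).differentiableAt.differentiableWithinAt)
      key
    set c : ℝ := δ * (ε/2) with hcdef
    have hc : 0 < c := by positivity
    set B : ℝ := M - x T v with hBdef
    have hBpos : 0 < B := by
      have := hcon T le_rfl
      rw [hBdef]; linarith
    set t₁ : ℝ := T + (B + 1)/c with ht₁def
    have ht₁T : T ≤ t₁ := by
      rw [ht₁def]
      have : 0 ≤ (B + 1)/c := by positivity
      linarith
    have := hgrow T Set.self_mem_Ici t₁ (Set.mem_Ici.mpr ht₁T) ht₁T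
    have hct : c * (t₁ - T) = B + 1 := by
      rw [ht₁def]
      field_simp
      ring
    rw [hct] at this
    have hub1 := hub v t₁ (hT0.trans ht₁T)
    rw [hBdef] at this
    linarith
  -- connectivity propagation
  have hwalk : ∀ u v : Fin n, G.Reachable u v → Q u → Q v := by
    intro u v huv
    obtain ⟨w⟩ := huv
    induction w with
    | nil => exact id
    | cons h p ih => exact fun hu => ih (hstep _ _ h hu)
  intro i
  have hQi : Q i := hwalk P i (hconn P i) hQP
  rw [Metric.tendsto_atTop]
  intro ε hε
  obtain ⟨T, hT0, hT⟩ := hQi (ε/2) (half_pos hε)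
  refine ⟨T, fun t ht => ?_⟩
  have h1 := hub i t (hT0.trans ht)
  have h2 := hT t ht
  rw [Real.dist_eq]
  have : |x t i - M| ≤ ε/2 := abs_le.mpr ⟨by linarith, by linarith⟩
  linarith
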